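/- If X is a regular topological space in which every compact subset is a Gδ set and Bob has a winning strategy in the Menger game G_fin(O,O) of length ω, then X is σ-compact. -/

import Mathlib

universe u

/-- A family of sets is an open cover: all members are open and their union is the whole space. -/
def IsOpenCover {X : Type u} [TopologicalSpace X] (𝒞 : Set (Set X)) : Prop :=
  (∀ U ∈ 𝒞, IsOpen U) ∧ ⋃₀ 𝒞 = Set.univ

/-- A strategy for Bob in the Menger game `G_fin(O,O)` of length `ω`: at inning `n`, given the
history of Alice's covers and her current cover, Bob picks a finite subfamily of it. -/
structure BobStratFinNat (X : Type u) [TopologicalSpace X] where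
  move : ∀ n : ℕ, (Fin n → Set (Set X)) → Set (Set X) → Finset (Set X)
  subset : ∀ n hist 𝒞, (↑(move n hist 𝒞) : Set (Set X)) ⊆ 𝒞

/-- The strategy is winning: against every sequence of open covers played by Alice, the union
of Bob's selections covers the space. -/
def BobStratFinNat.Winning {X : Type u} [TopologicalSpace X] (S : BobStratFinNat X) : Prop :=
  ∀ f : ℕ → Set (Set X), (∀ n, IsOpenCover (f n)) →
    (⋃ n, ⋃₀ (↑(S.move n (fun m : Fin n => f m) (f n)) : Set (Set X))) = Set.univ

open Set

namespace MengerProofAux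

variable {X : Type u} [TopologicalSpace X]

/-- The union of Bob's response to the cover `𝒱` played at inning `k` after history `h`. -/
def BU (S : BobStratFinNat X) (k : ℕ) (h : ℕ → Set (Set X)) (𝒱 : Set (Set X)) : Set X :=
  ⋃₀ (↑(S.move k (fun m : Fin k => h m) 𝒱) : Set (Set X))

/-- The "core" after history `h` of length `k`: points that are in the closure of Bob's
response to every possible next cover. -/
def Kt (S : BobStratFinNat X) (k : ℕ) (h : ℕ → Set (Set X)) : Set X :=
  ⋂ 𝒱 : {C : Set (Set X) // IsOpenCover C}, closure (BU S k h 𝒱.1)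

lemma isClosed_Kt (S : BobStratFinNat X) (k : ℕ) (h : ℕ → Set (Set X)) :
    IsClosed (Kt S k h) :=
  isClosed_iInter fun _ => isClosed_closure

lemma Kt_subset (S : BobStratFinNat X) (k : ℕ) (h : ℕ → Set (Set X))
    {𝒱 : Set (Set X)} (h𝒱 : IsOpenCover 𝒱) :
    Kt S k h ⊆ closure (BU S k h 𝒱) :=
  fun _ hx => mem_iInter.mp hx ⟨𝒱, h𝒱⟩

lemma notMem_Kt {S : BobStratFinNat X} {k : ℕ} {h : ℕ → Set (Set X)} {x : X}
    (hx : x ∉ Kt S k h) :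
    ∃ 𝒱 : Set (Set X), IsOpenCover 𝒱 ∧ x ∉ closure (BU S k h 𝒱) := by
  by_contra hcon
  push_neg at hcon
  exact hx (mem_iInter.mpr fun 𝒱 => hcon 𝒱.1 𝒱.2)

lemma exists_open_closure_subset [RegularSpace X] {x : X} {O : Set X}
    (hO : IsOpen O) (hx : x ∈ O) : ∃ V : Set X, IsOpen V ∧ x ∈ V ∧ closure V ⊆ O := by
  obtain ⟨t, ⟨htn, htc⟩, hts⟩ := (closed_nhds_basis x).mem_iff.mp (hO.mem_nhds hx)
  exact ⟨interior t, isOpen_interior, mem_interior_iff_mem_nhds.mpr htn,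
    (closure_minimal interior_subset htc).trans hts⟩

/-- The core is compact, by the regularity trick: cover it by sets whose closures are inside
elements of a given cover, together with sets whose closures miss the core. -/
theorem isCompact_Kt [RegularSpace X] (S : BobStratFinNat X) (k : ℕ) (h : ℕ → Set (Set X)) :
    IsCompact (Kt S k h) := by
  classical
  rcases (Kt S k h).eq_empty_or_nonempty with he | ⟨x₀, hx₀⟩
  · rw [he]; exact isCompact_empty
  apply isCompact_of_finite_subcover
  intro ι U hU hsub
  obtain ⟨i₀, hi₀⟩ : ∃ i, x₀ ∈ U i := by simpa using hsub hx₀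
  set 𝒱 : Set (Set X) :=
    {V | IsOpen V ∧ ((∃ i, closure V ⊆ U i) ∨ closure V ∩ Kt S k h = ∅)} with h𝒱def
  have hcover : IsOpenCover 𝒱 := by
    constructor
    · intro V hV; exact hV.1
    · apply eq_univ_of_forall
      intro x
      by_cases hx : x ∈ Kt S k h
      · obtain ⟨i, hi⟩ : ∃ i, x ∈ U i := by simpa using hsub hx
        obtain ⟨V, hVo, hxV, hVc⟩ := exists_open_closure_subset (hU i) hi
        exact ⟨V, ⟨hVo, Or.inl ⟨i, hVc⟩⟩, hxV⟩
      · obtain ⟨V, hVo, hxV, hVc⟩ :=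
          exists_open_closure_subset (isClosed_Kt S k h).isOpen_compl hx
        refine ⟨V, ⟨hVo, Or.inr ?_⟩, hxV⟩
        rw [eq_empty_iff_forall_notMem]
        rintro y ⟨hy1, hy2⟩
        exact hVc hy1 hy2
  have hsub2 : Kt S k h ⊆ closure (BU S k h 𝒱) := Kt_subset S k h hcover
  set σ := S.move k (fun m : Fin k => h m) 𝒱 with hσdef
  have hσ𝒱 : (↑σ : Set (Set X)) ⊆ 𝒱 := S.subset k _ 𝒱
  have hclosure : closure (BU S k h 𝒱) = ⋃ A ∈ σ, closure A := by
    rw [BU, ← hσdef, σ.finite_toSet.closure_sUnion]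
    simp
  refine ⟨σ.image (fun A => if hA : ∃ i, closure A ⊆ U i then hA.choose else i₀), ?_⟩
  intro x hx
  have hx2 : x ∈ ⋃ A ∈ σ, closure A := by rw [← hclosure]; exact hsub2 hx
  simp only [mem_iUnion] at hx2
  obtain ⟨A, hAσ, hxA⟩ := hx2
  have hA𝒱 : A ∈ 𝒱 := hσ𝒱 hAσ
  rcases hA𝒱.2 with hA1 | hA2
  · refine mem_iUnion₂.mpr ⟨hA1.choose, ?_, hA1.choose_spec hxA⟩
    rw [Finset.mem_image]
    exact ⟨A, hAσ, by rw [dif_pos hA1]⟩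
  · exfalso
    have : x ∈ closure A ∩ Kt S k h := ⟨hxA, hx⟩
    rw [hA2] at this
    exact this

/-- Lindelöf-type lemma from the winning strategy: any family of open sets covering a closed
set has a countable subfamily covering it. -/
theorem countable_subcover (S : BobStratFinNat X) (hS : S.Winning) {C : Set X}
    (hC : IsClosed C) {𝒪 : Set (Set X)} (h𝒪 : ∀ O ∈ 𝒪, IsOpen O) (hcov : C ⊆ ⋃₀ 𝒪) :
    ∃ 𝒯 ⊆ 𝒪, 𝒯.Countable ∧ C ⊆ ⋃₀ 𝒯 := by
  set 𝒰 : Set (Set X) := insert Cᶜ 𝒪 with h𝒰def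
  have hu : IsOpenCover 𝒰 := by
    constructor
    · rintro O (rfl | hO)
      · exact hC.isOpen_compl
      · exact h𝒪 _ hO
    · apply eq_univ_of_forall
      intro x
      by_cases hx : x ∈ C
      · obtain ⟨O, hO, hxO⟩ := hcov hx
        exact ⟨O, mem_insert_of_mem _ hO, hxO⟩
      · exact ⟨Cᶜ, mem_insert _ _, hx⟩
  have hw := hS (fun _ => 𝒰) (fun _ => hu)
  refine ⟨(⋃ n, (↑(S.move n (fun _ : Fin n => 𝒰) 𝒰) : Set (Set X))) ∩ 𝒪,
    inter_subset_right, ?_, ?_⟩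
  · exact (Set.Countable.mono inter_subset_left
      (countable_iUnion fun n => (S.move n _ 𝒰).countable_toSet))
  · intro y hy
    have hyu : y ∈ ⋃ n, ⋃₀ (↑(S.move n (fun _ : Fin n => 𝒰) 𝒰) : Set (Set X)) := by
      rw [hw]; exact mem_univ y
    obtain ⟨n, hn⟩ := mem_iUnion.mp hyu
    obtain ⟨A, hAσ, hyA⟩ := hn
    have hA𝒰 : A ∈ 𝒰 := S.subset n _ 𝒰 hAσ
    rcases hA𝒰 with rfl | hA𝒪
    · exact absurd hy hyA
    · exact ⟨A, ⟨mem_iUnion.mpr ⟨n, hAσ⟩, hA𝒪⟩, hyA⟩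

/-- The key countability step: there is a countable list of covers such that
any point outside the core is outside the closure of Bob's response to one of them. -/
theorem exists_nextCovers [RegularSpace X]
    (hGδ : ∀ K : Set X, IsCompact K →
      ∃ U : ℕ → Set X, (∀ n, IsOpen (U n)) ∧ (⋂ n, U n) = K)
    (S : BobStratFinNat X) (hS : S.Winning) (k : ℕ) (h : ℕ → Set (Set X)) :
    ∃ W : ℕ → Set (Set X), (∀ i, IsOpenCover (W i)) ∧
      ∀ x, x ∉ Kt S k h → ∃ i, x ∉ closure (BU S k h (W i)) := by
  classical
  obtain ⟨U, hUo, hUeq⟩ := hGδ _ (isCompact_Kt S k h)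
  have key : ∀ m : ℕ, ∃ Tm : Set (Set (Set X)), Tm.Countable ∧
      (∀ 𝒱 ∈ Tm, IsOpenCover 𝒱) ∧
      ∀ y ∈ (U m)ᶜ, ∃ 𝒱 ∈ Tm, y ∉ closure (BU S k h 𝒱) := by
    intro m
    set 𝒪 : Set (Set X) :=
      {O | ∃ 𝒱, IsOpenCover 𝒱 ∧ O = (closure (BU S k h 𝒱))ᶜ} with h𝒪def
    have h𝒪o : ∀ O ∈ 𝒪, IsOpen O := by
      rintro O ⟨𝒱, -, rfl⟩
      exact isClosed_closure.isOpen_compl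
    have hcov : (U m)ᶜ ⊆ ⋃₀ 𝒪 := by
      intro y hy
      have hyK : y ∉ Kt S k h := by
        intro hyK
        rw [← hUeq] at hyK
        exact hy (mem_iInter.mp hyK m)
      obtain ⟨𝒱, h𝒱, hy𝒱⟩ := notMem_Kt hyK
      exact ⟨(closure (BU S k h 𝒱))ᶜ, ⟨𝒱, h𝒱, rfl⟩, hy𝒱⟩
    obtain ⟨𝒯, h𝒯sub, h𝒯c, h𝒯cov⟩ :=
      countable_subcover S hS (hUo m).isClosed_compl h𝒪o hcov
    have hchoice : ∀ O : 𝒯, ∃ 𝒱, IsOpenCover 𝒱 ∧ (O : Set X) = (closure (BU S k h 𝒱))ᶜ :=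
      fun O => h𝒯sub O.2
    choose g hg1 hg2 using hchoice
    haveI := h𝒯c.to_subtype
    refine ⟨Set.range g, countable_range g, ?_, ?_⟩
    · rintro 𝒱 ⟨O, rfl⟩; exact hg1 O
    · intro y hy
      obtain ⟨O, hO𝒯, hyO⟩ := h𝒯cov hy
      refine ⟨g ⟨O, hO𝒯⟩, ⟨⟨O, hO𝒯⟩, rfl⟩, ?_⟩
      have h2 : O = (closure (BU S k h (g ⟨O, hO𝒯⟩)))ᶜ := hg2 ⟨O, hO𝒯⟩
      rw [h2] at hyO
      exact hyO
  choose Tm hTc hTcov hTreach using key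
  have hTcount : (insert {univ} (⋃ m, Tm m) : Set (Set (Set X))).Countable :=
    (countable_iUnion hTc).insert _
  obtain ⟨W, hW⟩ := hTcount.exists_eq_range (insert_nonempty _ _)
  refine ⟨W, ?_, ?_⟩
  · intro i
    have hWi : W i ∈ insert {univ} (⋃ m, Tm m) := by
      have := mem_range_self (f := W) i
      rwa [← hW] at this
    rcases hWi with h1 | h2
    · rw [h1]
      constructor
      · intro V hV
        rw [mem_singleton_iff] at hV
        rw [hV]; exact isOpen_univ
      · simp
    · obtain ⟨m, hm⟩ := mem_iUnion.mp h2
      exact hTcov m _ hm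
  · intro x hx
    have hx2 : x ∉ ⋂ n, U n := by rw [hUeq]; exact hx
    obtain ⟨m, hm⟩ : ∃ m, x ∉ U m := by
      by_contra hcon; push_neg at hcon; exact hx2 (mem_iInter.mpr hcon)
    obtain ⟨𝒱, h𝒱T, hx𝒱⟩ := hTreach m x hm
    have h𝒱T2 : 𝒱 ∈ insert {univ} (⋃ m, Tm m) :=
      mem_insert_of_mem _ (mem_iUnion.mpr ⟨m, h𝒱T⟩)
    rw [hW] at h𝒱T2
    obtain ⟨i, hi⟩ := h𝒱T2
    exact ⟨i, hi ▸ hx𝒱⟩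

/-- Histories along the tree of plays: the list records (in reverse chronological order)
which of the countably many designated covers was played at each inning. -/
noncomputable def histOf (nc : ℕ → (ℕ → Set (Set X)) → ℕ → Set (Set X)) :
    List ℕ → (ℕ → Set (Set X))
  | [] => fun _ => (∅ : Set (Set X))
  | n :: s => Function.update (histOf nc s) s.length (nc s.length (histOf nc s) n)

/-- The branch determined by a choice function. -/
def branchOf (pk : List ℕ → ℕ) : ℕ → List ℕ
  | 0 => []
  | k + 1 => pk (branchOf pk k) :: branchOf pk k

lemma branchOf_length (pk : List ℕ → ℕ) : ∀ k, (branchOf pk k).length = k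
  | 0 => rfl
  | k + 1 => by simp [branchOf, branchOf_length pk k]

end MengerProofAux

open MengerProofAux Set

/-- If `X` is regular, every compact subset of `X` is a `Gδ`, and Bob has a winning strategy
in the Menger game, then `X` is σ-compact. -/
theorem sigmaCompact_of_bob_winning_menger {X : Type u} [TopologicalSpace X] [RegularSpace X]
    (hGδ : ∀ K : Set X, IsCompact K →
      ∃ U : ℕ → Set X, (∀ n, IsOpen (U n)) ∧ (⋂ n, U n) = K)
    (S : BobStratFinNat X) (hS : S.Winning) :
    ∃ K : ℕ → Set X, (∀ n, IsCompact (K n)) ∧ (⋃ n, K n) = Set.univ := by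
  classical
  choose nc hnccov hncreach using exists_nextCovers hGδ S hS
  have e : List ℕ ≃ ℕ := Denumerable.eqv (List ℕ)
  refine ⟨fun n => Kt S (e.symm n).length (histOf nc (e.symm n)),
    fun n => isCompact_Kt S _ _, ?_⟩
  rw [eq_univ_iff_forall]
  intro x
  by_contra hx
  simp only [mem_iUnion, not_exists] at hx
  have hxall : ∀ s : List ℕ, x ∉ Kt S s.length (histOf nc s) := by
    intro s
    have := hx (e s)
    rwa [Equiv.symm_apply_apply] at this
  -- the choice of the next cover index defeating x
  have hpick : ∀ s : List ℕ, ∃ i : ℕ,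
      x ∉ closure (BU S s.length (histOf nc s) (nc s.length (histOf nc s) i)) :=
    fun s => hncreach s.length (histOf nc s) x (hxall s)
  choose pk pkSpec using hpick
  set bs : ℕ → List ℕ := branchOf pk with hbsdef
  have hlen : ∀ k, (bs k).length = k := branchOf_length pk
  -- the play
  set f : ℕ → Set (Set X) := fun k => nc k (histOf nc (bs k)) (pk (bs k)) with hfdef
  have hstep : ∀ k, histOf nc (bs (k + 1)) = Function.update (histOf nc (bs k)) k (f k) := by
    intro k
    show histOf nc (pk (bs k) :: bs k) = _
    rw [histOf]
    rw [hlen k]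
  have hagree : ∀ k m, m < k → histOf nc (bs k) m = f m := by
    intro k
    induction k with
    | zero => intro m hm; exact absurd hm (Nat.not_lt_zero m)
    | succ k ih =>
      intro m hm
      rw [hstep k]
      by_cases hmk : m = k
      · subst hmk
        rw [Function.update_self]
      · rw [Function.update_of_ne hmk]
        exact ih m (by omega)
  have hfcov : ∀ k, IsOpenCover (f k) := fun k => hnccov _ _ _
  have hw := hS f hfcov
  have hxu : x ∈ ⋃ n, ⋃₀ (↑(S.move n (fun m : Fin n => f m) (f n)) : Set (Set X)) := by
    rw [hw]; exact mem_univ x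
  obtain ⟨k, hk⟩ := mem_iUnion.mp hxu
  have heq : (fun m : Fin k => f m) = (fun m : Fin k => histOf nc (bs k) m) := by
    funext m
    exact (hagree k m m.isLt).symm
  have hBU : x ∈ BU S k (histOf nc (bs k)) (f k) := by
    rw [BU, ← heq]
    exact hk
  have hcl : x ∈ closure (BU S k (histOf nc (bs k)) (f k)) := subset_closure hBU
  have hps := pkSpec (bs k)
  rw [hlen k] at hps
  exact hps hcl
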